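/- Let Γ ⊂ ℝⁿ be an open convex cone containing the positive octant Γₙ = {λ ∈ ℝⁿ : λ₁ > 0, …, λₙ > 0}, and let f : Γ → (0,∞) be concave, differentiable, positively homogeneous of degree one (f(rλ) = r·f(λ) for all r > 0, λ ∈ Γ), with ∂f(λ)/∂λⱼ > 0 for every λ ∈ Γ and every j. Assume there is γ > 0 such that f(μ) ≥ n·γ^{1/n}·(∏_{j=1}^n μⱼ)^{1/n} for all μ ∈ Γₙ. Then ∏_{j=1}^n ∂f(λ)/∂λⱼ ≥ γ for every λ ∈ Γ. -/

import Mathlib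

open Real Filter Topology

/-- Gradient inequality for concave functions. -/
theorem concave_grad_ineq {n : ℕ} {Γ : Set (Fin n → ℝ)} {f : (Fin n → ℝ) → ℝ}
    (hconc : ConcaveOn ℝ Γ f) {x y : Fin n → ℝ} (hx : x ∈ Γ) (hy : y ∈ Γ)
    (hd : DifferentiableAt ℝ f x) :
    f y ≤ f x + fderiv ℝ f x (y - x) := by
  set v := y - x with hv
  have hline : HasDerivAt (fun t : ℝ => x + t • v) v 0 := by
    simpa using ((hasDerivAt_id (0:ℝ)).smul_const v).const_add x
  have hg : HasDerivAt (fun t : ℝ => f (x + t • v)) (fderiv ℝ f x v) 0 := by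
    have hd' : HasFDerivAt f (fderiv ℝ f x) (x + (0:ℝ) • v) := by
      simpa using hd.hasFDerivAt
    exact hd'.comp_hasDerivAt 0 hline
  have key : f y - f x ≤ fderiv ℝ f x v := by
    have hslope := hasDerivAt_iff_tendsto_slope.1 hg
    have hslope' : Tendsto (slope (fun t : ℝ => f (x + t • v)) 0) (𝓝[>] (0:ℝ))
        (𝓝 (fderiv ℝ f x v)) :=
      hslope.mono_left (nhdsWithin_mono _ (fun t ht => ne_of_gt ht))
    refine ge_of_tendsto hslope' ?_
    filter_upwards [Ioc_mem_nhdsGT_of_mem (by simp : (0:ℝ) ∈ Set.Ico (0:ℝ) 1)] with t ht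
    rcases ht with ⟨ht0, ht1⟩
    have hmem : f ((1 - t) • x + t • y) ≥ (1 - t) * f x + t * f y :=
      hconc.2 hx hy (by linarith) (le_of_lt ht0) (by ring)
    have heq : x + t • v = (1 - t) • x + t • y := by
      simp [hv, smul_sub, sub_smul]; abel
    rw [slope_def_field, heq, sub_zero, le_div_iff₀ ht0]
    simp only [zero_smul, add_zero]
    nlinarith
  have := (fderiv ℝ f x).map_sub y x
  linarith [key]

theorem structural_condition (n : ℕ) (hn : 0 < n)
    (Γ : Set (Fin n → ℝ)) (hΓopen : IsOpen Γ) (hΓconvex : Convex ℝ Γ)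
    (hΓcone : ∀ l ∈ Γ, ∀ r : ℝ, 0 < r → r • l ∈ Γ)
    (hΓoct : ∀ μ : Fin n → ℝ, (∀ j, 0 < μ j) → μ ∈ Γ)
    (f : (Fin n → ℝ) → ℝ)
    (hfpos : ∀ l ∈ Γ, 0 < f l)
    (hconc : ConcaveOn ℝ Γ f)
    (hdiff : ∀ l ∈ Γ, DifferentiableAt ℝ f l)
    (hhom : ∀ l ∈ Γ, ∀ r : ℝ, 0 < r → f (r • l) = r * f l)
    (hderiv : ∀ l ∈ Γ, ∀ j : Fin n, 0 < fderiv ℝ f l (Pi.single j 1))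
    (γ : ℝ) (hγ : 0 < γ)
    (hlow : ∀ μ : Fin n → ℝ, (∀ j, 0 < μ j) →
      (n : ℝ) * γ ^ ((1 : ℝ) / n) * (∏ j, μ j) ^ ((1 : ℝ) / n) ≤ f μ) :
    ∀ l ∈ Γ, γ ≤ ∏ j, fderiv ℝ f l (Pi.single j 1) := by
  intro l hl
  set D := fderiv ℝ f l with hD
  set a : Fin n → ℝ := fun j => D (Pi.single j 1) with ha
  have hapos : ∀ j, 0 < a j := fun j => hderiv l hl j
  -- Step 1: for any μ ∈ Γ (in particular with all rescalings in Γ), f μ ≤ D μ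
  have hB : ∀ μ ∈ Γ, f μ ≤ D μ := by
    intro μ hμ
    by_contra hcon
    push_neg at hcon
    set d := f μ - D μ with hd
    have hdpos : 0 < d := by simp [hd]; linarith
    set C := f l - D l with hC
    have hs : ∀ s : ℝ, 0 < s → s * d ≤ C := by
      intro s hs
      have hsμ : s • μ ∈ Γ := hΓcone μ hμ s hs
      have h1 : f (s • μ) ≤ f l + D (s • μ - l) :=
        concave_grad_ineq hconc hl hsμ (hdiff l hl)
      have h2 : f (s • μ) = s * f μ := hhom μ hμ s hs
      have h3 : D (s • μ - l) = s * D μ - D l := by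
        rw [map_sub, map_smul]; simp
      rw [h2, h3] at h1
      simp only [hd, hC]
      nlinarith
    have h4 := hs ((max C 0 + 1) / d) (by positivity)
    rw [div_mul_cancel₀ _ (ne_of_gt hdpos)] at h4
    have : C ≤ max C 0 := le_max_left _ _
    linarith
  -- Step 2: apply with μ j = (a j)⁻¹
  set μ : Fin n → ℝ := fun j => (a j)⁻¹ with hμdef
  have hμpos : ∀ j, 0 < μ j := fun j => inv_pos.2 (hapos j)
  have hμΓ : μ ∈ Γ := hΓoct μ hμpos
  have hDμ : D μ = (n : ℝ) := by
    have hrepr : μ = ∑ j, μ j • (Pi.single j (1:ℝ) : Fin n → ℝ) := by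
      funext k
      simp [Finset.sum_apply, Pi.single_apply]
    calc D μ = ∑ j, μ j * a j := by
          conv_lhs => rw [hrepr]
          rw [map_sum]
          simp only [map_smul, smul_eq_mul, ha]
      _ = ∑ _j : Fin n, (1 : ℝ) := by
          refine Finset.sum_congr rfl fun j _ => ?_
          simp [hμdef]
          exact inv_mul_cancel₀ (ne_of_gt (hapos j))
      _ = (n : ℝ) := by simp
  have hlow' := hlow μ hμpos
  have hchain : (n : ℝ) * γ ^ ((1:ℝ)/n) * (∏ j, μ j) ^ ((1:ℝ)/n) ≤ (n : ℝ) := by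
    calc (n : ℝ) * γ ^ ((1:ℝ)/n) * (∏ j, μ j) ^ ((1:ℝ)/n) ≤ f μ := hlow'
      _ ≤ D μ := hB μ hμΓ
      _ = (n : ℝ) := hDμ
  set A : ℝ := ∏ j, a j with hA
  have hApos : 0 < A := Finset.prod_pos fun j _ => hapos j
  have hprodμ : (∏ j, μ j) = A⁻¹ := by
    simp [hμdef, hA, Finset.prod_inv_distrib]
  rw [hprodμ] at hchain
  have hninv : γ ^ ((1:ℝ)/n) * (A⁻¹) ^ ((1:ℝ)/n) ≤ 1 := by
    have hnpos : (0:ℝ) < n := Nat.cast_pos.2 hn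
    nlinarith [mul_le_mul_of_nonneg_left hchain (le_of_lt (inv_pos.2 hnpos)),
      Real.rpow_pos_of_pos hγ ((1:ℝ)/n), Real.rpow_pos_of_pos (inv_pos.2 hApos) ((1:ℝ)/n)]
  have hinvr : (A⁻¹) ^ ((1:ℝ)/n) = (A ^ ((1:ℝ)/n))⁻¹ := Real.inv_rpow (le_of_lt hApos) _
  rw [hinvr] at hninv
  have hArpos : 0 < A ^ ((1:ℝ)/n) := Real.rpow_pos_of_pos hApos _
  have hle : γ ^ ((1:ℝ)/n) ≤ A ^ ((1:ℝ)/n) := by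
    rw [mul_inv_le_iff₀ hArpos] at hninv
    linarith
  have := Real.rpow_le_rpow (le_of_lt (Real.rpow_pos_of_pos hγ _)) hle (by positivity : (0:ℝ) ≤ (n:ℝ))
  rw [← Real.rpow_mul (le_of_lt hγ), ← Real.rpow_mul (le_of_lt hApos)] at this
  have hne : (n : ℝ) ≠ 0 := Nat.cast_ne_zero.2 hn.ne'
  rw [one_div, inv_mul_cancel₀ hne, Real.rpow_one, Real.rpow_one] at this
  exact this
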